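/- Let E be a finite type, let k be a natural number, and let A : Fin k → E → ℤ be a family of integer linear forms. If there exists x : E → ℝ with x(e) ≥ 0 for all e ∈ E, x not identically zero, and ∑_{e ∈ E} A(i)(e) · x(e) = 0 for every i, then there exists y : E → ℤ with y(e) ≥ 0 for all e ∈ E, y not identically zero, and ∑_{e ∈ E} A(i)(e) · y(e) = 0 for every i. -/

import Mathlib

private lemma sum_split {R : Type*} [AddCommMonoid R] {S : Type*} [Fintype S] [DecidableEq S]
    (f : S → R) (e0 : S) :
    ∑ e, f e = f e0 + ∑ e ∈ Finset.univ.erase e0, f e :=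
  (Finset.add_sum_erase _ f (Finset.mem_univ e0)).symm

/-- Rational solutions of a rational homogeneous linear system are dense in the real
solutions. Proved by induction on the number of equations (Gaussian elimination). -/
private lemma exists_rat_approx {S : Type*} [Fintype S] [DecidableEq S] :
    ∀ (k : ℕ) (B : Fin k → S → ℚ) (x : S → ℝ),
      (∀ i, ∑ e, (B i e : ℝ) * x e = 0) → ∀ ε : ℝ, 0 < ε →
      ∃ y : S → ℚ, (∀ i, ∑ e, B i e * y e = 0) ∧ ∀ e, |(y e : ℝ) - x e| < ε := by
  intro k
  induction k with
  | zero =>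
    intro B x _ ε hε
    choose y hy using fun e => exists_rat_near (x e) hε
    exact ⟨y, fun i => i.elim0, fun e => by simpa [abs_sub_comm] using hy e⟩
  | succ k IH =>
    intro B x hx ε hε
    set b : S → ℚ := B (Fin.last k) with hbdef
    by_cases hb : ∀ e, b e = 0
    · obtain ⟨y, hyeq, hynear⟩ := IH (fun i => B i.castSucc) x (fun i => hx i.castSucc) ε hε
      refine ⟨y, ?_, hynear⟩
      intro i
      refine Fin.lastCases ?_ (fun j => hyeq j) i
      simp [← hbdef, hb]
    · push_neg at hb
      obtain ⟨e0, he0⟩ := hb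
      have he0R : ((b e0 : ℝ)) ≠ 0 := by exact_mod_cast he0
      set c : Fin k → ℚ := fun i => B i.castSucc e0 / b e0 with hcdef
      set B' : Fin k → S → ℚ := fun i e => B i.castSucc e - c i * b e with hB'def
      have hB'e0 : ∀ i, B' i e0 = 0 := by
        intro i
        simp only [hB'def, hcdef]
        field_simp
        simp
      have hx' : ∀ i, ∑ e, (B' i e : ℝ) * x e = 0 := by
        intro i
        have h1 := hx i.castSucc
        have h2 := hx (Fin.last k)
        have heq : ∑ e, (B' i e : ℝ) * x e
            = ∑ e, ((B i.castSucc e : ℝ) * x e - (c i : ℝ) * ((b e : ℝ) * x e)) := by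
          refine Finset.sum_congr rfl fun e _ => ?_
          simp only [hB'def]
          push_cast
          ring
        rw [heq, Finset.sum_sub_distrib, h1, ← Finset.mul_sum, h2]
        ring
      set K : ℝ := 1 + (∑ e, |(b e : ℝ)|) / |(b e0 : ℝ)| with hKdef
      have hK1 : (1 : ℝ) ≤ K := by
        have h : 0 ≤ (∑ e, |(b e : ℝ)|) / |(b e0 : ℝ)| := by positivity
        rw [hKdef]; linarith
      have hK0 : (0 : ℝ) < K := lt_of_lt_of_le one_pos hK1
      obtain ⟨y', hy'eq, hy'near⟩ := IH B' x hx' (ε / K) (by positivity)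
      set t : ℚ := (∑ e, b e * y' e) / b e0 with htdef
      set y : S → ℚ := fun e => if e = e0 then y' e0 - t else y' e with hydef
      have hyoff : ∀ e, e ≠ e0 → y e = y' e := by
        intro e he; simp [hydef, he]
      have hye0 : y e0 = y' e0 - t := by simp [hydef]
      have hsum_b : ∑ e, b e * y e = 0 := by
        calc ∑ e, b e * y e
            = b e0 * y e0 + ∑ e ∈ Finset.univ.erase e0, b e * y e :=
              sum_split (fun e => b e * y e) e0
          _ = b e0 * (y' e0 - t) + ∑ e ∈ Finset.univ.erase e0, b e * y' e := by
              rw [hye0]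
              congr 1
              exact Finset.sum_congr rfl fun e he => by
                rw [hyoff e (Finset.ne_of_mem_erase he)]
          _ = b e0 * (y' e0 - t) + (∑ e, b e * y' e - b e0 * y' e0) := by
              rw [sum_split (fun e => b e * y' e) e0]; ring
          _ = ∑ e, b e * y' e - b e0 * t := by ring
          _ = 0 := by rw [htdef]; field_simp; simp
      have heqs : ∀ i : Fin (k + 1), ∑ e, B i e * y e = 0 := by
        intro i
        refine Fin.lastCases (by simpa [← hbdef] using hsum_b) (fun j => ?_) i
        have hB'y : ∑ e, B' j e * y e = ∑ e, B' j e * y' e := by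
          rw [sum_split (fun e => B' j e * y e) e0, sum_split (fun e => B' j e * y' e) e0,
            hB'e0 j]
          simp only [zero_mul]
          congr 1
          exact Finset.sum_congr rfl fun e he => by
            rw [hyoff e (Finset.ne_of_mem_erase he)]
        have heq : ∑ e, B j.castSucc e * y e
            = ∑ e, (B' j e * y e + c j * (b e * y e)) := by
          refine Finset.sum_congr rfl fun e _ => ?_
          simp only [hB'def]; ring
        rw [heq, Finset.sum_add_distrib, hB'y, hy'eq j, ← Finset.mul_sum, hsum_b]
        ring
      refine ⟨y, heqs, ?_⟩
      intro e
      by_cases he : e = e0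
      · subst he
        have hyev : (y e : ℝ) = (y' e : ℝ) - (t : ℝ) := by
          rw [hye0]; push_cast; ring
        have hbx : ∑ f, (b f : ℝ) * x f = 0 := by simpa [← hbdef] using hx (Fin.last k)
        have htR' : (t : ℝ) = (∑ f, (b f : ℝ) * ((y' f : ℝ) - x f)) / (b e : ℝ) := by
          rw [htdef]
          push_cast
          congr 1
          rw [← sub_zero (∑ f, (b f : ℝ) * (y' f : ℝ)), ← hbx, ← Finset.sum_sub_distrib]
          exact Finset.sum_congr rfl fun f _ => by ring
        have habs : |(t : ℝ)| ≤ (∑ f, |(b f : ℝ)|) * (ε / K) / |(b e : ℝ)| := by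
          rw [htR', abs_div]
          refine div_le_div_of_nonneg_right ?_ (abs_nonneg _) |>.trans_eq rfl
          calc |∑ f, (b f : ℝ) * ((y' f : ℝ) - x f)|
              ≤ ∑ f, |(b f : ℝ) * ((y' f : ℝ) - x f)| := Finset.abs_sum_le_sum_abs _ _
            _ = ∑ f, |(b f : ℝ)| * |(y' f : ℝ) - x f| := by
                exact Finset.sum_congr rfl fun f _ => abs_mul _ _
            _ ≤ ∑ f, |(b f : ℝ)| * (ε / K) :=
                Finset.sum_le_sum fun f _ =>
                  mul_le_mul_of_nonneg_left (hy'near f).le (abs_nonneg _)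
            _ = (∑ f, |(b f : ℝ)|) * (ε / K) := by rw [← Finset.sum_mul]
        have hfinal : |(y e : ℝ) - x e| < ε / K + (∑ f, |(b f : ℝ)|) * (ε / K) / |(b e : ℝ)| := by
          rw [hyev]
          calc |(y' e : ℝ) - (t : ℝ) - x e|
              = |((y' e : ℝ) - x e) + (-(t : ℝ))| := by ring_nf
            _ ≤ |(y' e : ℝ) - x e| + |(-(t : ℝ))| := abs_add_le _ _
            _ = |(y' e : ℝ) - x e| + |(t : ℝ)| := by rw [abs_neg]
            _ < ε / K + (∑ f, |(b f : ℝ)|) * (ε / K) / |(b e : ℝ)| :=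
                add_lt_add_of_lt_of_le (hy'near e) habs
        have hKcalc : ε / K + (∑ f, |(b f : ℝ)|) * (ε / K) / |(b e : ℝ)| = ε := by
          have : ε / K + (∑ f, |(b f : ℝ)|) * (ε / K) / |(b e : ℝ)|
              = (ε / K) * K := by
            rw [hKdef]
            field_simp
          rw [this, div_mul_cancel₀ _ hK0.ne']
        rw [hKcalc] at hfinal
        exact hfinal
      · rw [hyoff e he]
        exact lt_of_lt_of_le (hy'near e) (div_le_self hε.le hK1)


private lemma sum_subtype_of_vanish {E : Type*} [Fintype E] {M : Type*} [AddCommMonoid M]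
    (p : E → Prop) [DecidablePred p] (g : E → M) (h : ∀ e, ¬p e → g e = 0) :
    ∑ s : {e // p e}, g s.1 = ∑ e, g e := by
  classical
  have h1 : ∑ e ∈ Finset.univ.filter p, g e = ∑ e, g e :=
    Finset.sum_filter_of_ne fun e _ hne => by_contra fun hp => hne (h e hp)
  have h2 : ∑ e ∈ Finset.univ.filter p, g e = ∑ s : {e // p e}, g s.1 :=
    Finset.sum_subtype _ (fun e => by simp) g
  exact h2.symm.trans h1

/-- General form of Lemma 'solution1': a finite homogeneous system of linear equations
with integer coefficients that admits a nontrivial nonnegative real solution also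
admits a nontrivial nonnegative integral solution. -/
theorem integral_solution_of_real_solution
    {E : Type*} [Fintype E] {k : ℕ} (A : Fin k → E → ℤ)
    (hreal : ∃ x : E → ℝ, (∀ e, 0 ≤ x e) ∧ x ≠ 0 ∧
      ∀ i : Fin k, ∑ e : E, (A i e : ℝ) * x e = 0) :
    ∃ y : E → ℤ, (∀ e, 0 ≤ y e) ∧ y ≠ 0 ∧
      ∀ i : Fin k, ∑ e : E, A i e * y e = 0 := by
  classical
  obtain ⟨x, hx0, hxne, hxeq⟩ := hreal
  set p : E → Prop := fun e => x e ≠ 0 with hpdef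
  have hSne : Nonempty {e // p e} := by
    rw [Function.ne_iff] at hxne
    obtain ⟨e, he⟩ := hxne
    exact ⟨⟨e, he⟩⟩
  have hxpos : ∀ s : {e // p e}, 0 < x s.1 := fun s => lt_of_le_of_ne (hx0 s.1) (Ne.symm s.2)
  set B : Fin k → {e // p e} → ℚ := fun i s => (A i s.1 : ℚ) with hBdef
  have hxS : ∀ i, ∑ s : {e // p e}, (B i s : ℝ) * x s.1 = 0 := by
    intro i
    have hv : ∀ e, ¬p e → (A i e : ℝ) * x e = 0 := by
      intro e he
      rw [hpdef, not_not] at he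
      simp [he]
    have h1 : ∑ s : {e // p e}, (A i s.1 : ℝ) * x s.1 = ∑ e, (A i e : ℝ) * x e :=
      sum_subtype_of_vanish p (fun e => (A i e : ℝ) * x e) hv
    have h2 : ∑ s : {e // p e}, ((B i s : ℚ) : ℝ) * x s.1
        = ∑ s : {e // p e}, (A i s.1 : ℝ) * x s.1 := by
      refine Finset.sum_congr rfl fun s _ => ?_
      rw [hBdef]; push_cast; ring
    rw [h2, h1, hxeq i]
  obtain ⟨s0, -, hs0⟩ := Finset.exists_min_image Finset.univ (fun s : {e // p e} => x s.1)
    Finset.univ_nonempty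
  set ε : ℝ := x s0.1 with hεdef
  have hε : 0 < ε := hxpos s0
  obtain ⟨y, hyeq, hynear⟩ := exists_rat_approx k B (fun s => x s.1) hxS ε hε
  have hypos : ∀ s, 0 < y s := by
    intro s
    have h1 := (abs_lt.mp (hynear s)).1
    have h2 : ε ≤ x s.1 := hs0 s (Finset.mem_univ s)
    have : (0 : ℝ) < (y s : ℝ) := by linarith
    exact_mod_cast this
  set d : ℕ := ∏ s : {e // p e}, (y s).den with hddef
  have hd : 0 < d := Finset.prod_pos fun s _ => (y s).den_pos
  have hint : ∀ s : {e // p e}, ∃ m : ℤ, (m : ℚ) = (d : ℚ) * y s := by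
    intro s
    obtain ⟨u, hu⟩ := Finset.dvd_prod_of_mem (fun s : {e // p e} => (y s).den)
      (Finset.mem_univ s)
    refine ⟨(y s).num * u, ?_⟩
    have hnum : ((y s).num : ℚ) = y s * ((y s).den : ℚ) := (Rat.mul_den_eq_num (y s)).symm
    rw [← hddef] at hu
    push_cast [hu, hnum]
    ring
  choose m hm using hint
  set Q : E → ℚ := fun e => if h : p e then y ⟨e, h⟩ else 0 with hQdef
  set z : E → ℤ := fun e => if h : p e then m ⟨e, h⟩ else 0 with hzdef
  have hQval : ∀ (e : E) (h : p e), Q e = y ⟨e, h⟩ := by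
    intro e h
    rw [hQdef]
    exact dif_pos h
  have hzQ : ∀ e, (z e : ℚ) = (d : ℚ) * Q e := by
    intro e
    by_cases h : p e
    · rw [hQval e h, hzdef]
      dsimp only
      rw [dif_pos h]
      exact hm ⟨e, h⟩
    · rw [hzdef, hQdef]
      dsimp only
      rw [dif_neg h, dif_neg h]
      simp
  have hQnn : ∀ e, 0 ≤ Q e := by
    intro e
    by_cases h : p e
    · rw [hQval e h]; exact (hypos ⟨e, h⟩).le
    · rw [hQdef]; dsimp only; rw [dif_neg h]
  refine ⟨z, ?_, ?_, ?_⟩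
  · intro e
    have : (0 : ℚ) ≤ (z e : ℚ) := by
      rw [hzQ e]
      exact mul_nonneg (by positivity) (hQnn e)
    exact_mod_cast this
  · intro hzz
    have h1 : z s0.1 = 0 := by rw [hzz]; rfl
    have h2 : (z s0.1 : ℚ) = (d : ℚ) * y s0 := by
      rw [hzQ s0.1, hQval s0.1 s0.2]
    have h3 : (0 : ℚ) < (d : ℚ) * y s0 :=
      mul_pos (by exact_mod_cast hd) (hypos s0)
    rw [← h2, h1] at h3
    simp at h3
  · intro i
    have hQsum : ∑ e, (A i e : ℚ) * Q e = 0 := by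
      have hv : ∀ e, ¬p e → (A i e : ℚ) * Q e = 0 := by
        intro e he
        rw [hQdef]
        dsimp only
        rw [dif_neg he, mul_zero]
      rw [← sum_subtype_of_vanish p (fun e => (A i e : ℚ) * Q e) hv]
      rw [← hyeq i]
      refine Finset.sum_congr rfl fun s _ => ?_
      rw [hQval s.1 s.2, hBdef]
    have hq : ∑ e, (A i e : ℚ) * (z e : ℚ) = 0 := by
      have : ∑ e, (A i e : ℚ) * (z e : ℚ) = (d : ℚ) * ∑ e, (A i e : ℚ) * Q e := by
        rw [Finset.mul_sum]
        refine Finset.sum_congr rfl fun e _ => ?_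
        rw [hzQ e]; ring
      rw [this, hQsum, mul_zero]
    have : ((∑ e, A i e * z e : ℤ) : ℚ) = 0 := by push_cast; exact hq
    exact_mod_cast this
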